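/- Let γ be a unit-speed Frenet curve with κ > 0 and let β be the integral curve of X = xT + yN + zB with x² + y² + z² = 1. If the principal normal of β equals B (Mannheim condition, i.e., β'' is a nonzero multiple of B), then z ≡ 0, x(s) = sin(∫κ ds), and y(s) = cos(∫κ ds) (up to integration constant). -/

import Mathlib

open Real

private lemma angle_diff_lemma {α β : ℝ} (hs : Real.sin α = Real.sin β)
    (hc : Real.cos α = Real.cos β) : ∃ k : ℤ, α = β + k * (2 * π) := by
  have h : Complex.exp (α * Complex.I) = Complex.exp (β * Complex.I) := by
    rw [Complex.exp_mul_I, Complex.exp_mul_I, ← Complex.ofReal_sin, ← Complex.ofReal_sin,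
      ← Complex.ofReal_cos, ← Complex.ofReal_cos, hs, hc]
  obtain ⟨n, hn⟩ := Complex.exp_eq_exp_iff_exists_int.1 h
  refine ⟨n, ?_⟩
  have h2 : (α : ℂ) * Complex.I = ((β : ℝ) + (n : ℝ) * (2 * π) : ℝ) * Complex.I := by
    rw [hn]; push_cast; ring
  have h3 := mul_right_cancel₀ Complex.I_ne_zero h2
  exact_mod_cast h3

private lemma arctan_tan_shift {θ : ℝ} (h : Real.cos θ ≠ 0) :
    ∃ k : ℤ, Real.arctan (Real.tan θ) = θ + k * π := by
  have hπ : (0:ℝ) < π := Real.pi_pos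
  set n : ℤ := round (θ / π) with hn
  have hb : |θ / π - n| ≤ 1 / 2 := abs_sub_round _
  have heq : θ - n * π = (θ / π - n) * π := by field_simp
  have hb2 : |θ - n * π| ≤ π / 2 := by
    rw [heq, abs_mul, abs_of_pos hπ]; nlinarith
  have hne1 : θ - n * π ≠ π / 2 := by
    intro hcon
    apply h
    have : θ = n * π + π / 2 := by linarith
    rw [this, Real.cos_add]
    simp [Real.sin_int_mul_pi, Real.cos_pi_div_two]
  have hne2 : θ - n * π ≠ -(π / 2) := by
    intro hcon
    apply h
    have : θ = n * π + -(π / 2) := by linarith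
    rw [this, Real.cos_add]
    simp [Real.sin_int_mul_pi, Real.cos_pi_div_two]
  rw [abs_le] at hb2
  have hlt1 : -(π/2) < θ - n * π := lt_of_le_of_ne hb2.1 (Ne.symm hne2)
  have hlt2 : θ - n * π < π / 2 := lt_of_le_of_ne hb2.2 hne1
  have htan : Real.tan (θ - n * π) = Real.tan θ := Real.tan_periodic.sub_int_mul_eq n
  refine ⟨-n, ?_⟩
  rw [← htan, Real.arctan_tan hlt1 hlt2]
  push_cast; ring

private lemma lift_unique {x y φ ψ : ℝ → ℝ} {s : Set ℝ} (hs : IsPreconnected s)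
    (hφ : Continuous φ) (hψ : Continuous ψ)
    (h1 : ∀ t ∈ s, x t = Real.sin (φ t) ∧ y t = Real.cos (φ t))
    (h2 : ∀ t ∈ s, x t = Real.sin (ψ t) ∧ y t = Real.cos (ψ t))
    {a : ℝ} (ha : a ∈ s) (hv : φ a = ψ a) : Set.EqOn φ ψ s := by
  have hπ : (0:ℝ) < π := Real.pi_pos
  set g : ℝ → ℝ := fun t => (φ t - ψ t) / (2 * π) with hg
  have hgc : Continuous g := (hφ.sub hψ).div_const _
  have hint : ∀ t ∈ s, ∃ k : ℤ, g t = k := by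
    intro t ht
    obtain ⟨k, hk⟩ := angle_diff_lemma
      ((h1 t ht).1.symm.trans (h2 t ht).1) ((h1 t ht).2.symm.trans (h2 t ht).2)
    exact ⟨k, by rw [hg]; field_simp [hk]; linear_combination hk⟩
  have hga : g a = 0 := by simp [hg, hv]
  intro t ht
  have hmain : g t = 0 := by
    by_contra hne
    obtain ⟨k, hk⟩ := hint t ht
    have hk0 : k ≠ 0 := by rintro rfl; simp [hk] at hne
    have hnotint : ∀ u ∈ s, g u ≠ 1/2 ∧ g u ≠ -(1/2) := by
      intro u hu
      obtain ⟨m, hm⟩ := hint u hu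
      constructor <;> intro hcon <;> rw [hm] at hcon
      · have : (2*m : ℝ) = 1 := by linarith
        have : (2*m : ℤ) = 1 := by exact_mod_cast this
        omega
      · have : (2*m : ℝ) = -1 := by linarith
        have : (2*m : ℤ) = -1 := by exact_mod_cast this
        omega
    rcases lt_or_gt_of_ne hk0 with hneg | hpos
    · have h12 : (-(1/2) : ℝ) ∈ Set.Icc (g t) (g a) := by
        rw [hk, hga]
        constructor
        · have hk1 : k ≤ -1 := by omega
          have : (k:ℝ) ≤ -1 := by exact_mod_cast hk1
          linarith
        · linarith
      obtain ⟨u, hu, hgu⟩ := hs.intermediate_value ht ha hgc.continuousOn h12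
      exact (hnotint u hu).2 hgu
    · have h12 : ((1/2) : ℝ) ∈ Set.Icc (g a) (g t) := by
        rw [hk, hga]
        constructor
        · linarith
        · have hk1 : 1 ≤ k := by omega
          have : (1:ℝ) ≤ (k:ℝ) := by exact_mod_cast hk1
          linarith
      obtain ⟨u, hu, hgu⟩ := hs.intermediate_value ha ht hgc.continuousOn h12
      exact (hnotint u hu).1 hgu
  have : φ t - ψ t = 0 := by
    have := hmain
    rw [hg] at this
    field_simp at this
    linarith [this]
  linarith

private lemma local_lift_pos {x y : ℝ → ℝ} (hx : Continuous x) (hy : Continuous y)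
    (hu : ∀ s, x s ^ 2 + y s ^ 2 = 1) {s₀ : ℝ} (h0 : 0 < y s₀) :
    ∃ ε > 0, ∃ ψ : ℝ → ℝ, Continuous ψ ∧
      ∀ t ∈ Metric.ball s₀ ε, x t = Real.sin (ψ t) ∧ y t = Real.cos (ψ t) := by
  set c := y s₀ / 2 with hc
  have hcpos : 0 < c := by positivity
  have hopen : IsOpen (y ⁻¹' Set.Ioi c) := (isOpen_Ioi).preimage hy
  have hmem : s₀ ∈ y ⁻¹' Set.Ioi c := by simp [hc]; linarith
  obtain ⟨ε, hε, hball⟩ := Metric.isOpen_iff.1 hopen s₀ hmem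
  have hmaxpos : ∀ t, 0 < max (y t) c := fun t => lt_of_lt_of_le hcpos (le_max_right _ _)
  refine ⟨ε, hε, fun t => Real.arctan (x t / max (y t) c), ?_, ?_⟩
  · exact Real.continuous_arctan.comp (hx.div (hy.max continuous_const)
      (fun t => (hmaxpos t).ne'))
  · intro t ht
    have hyt : c < y t := hball ht
    have hytpos : 0 < y t := lt_trans hcpos hyt
    have hmax : max (y t) c = y t := max_eq_left hyt.le
    simp only [hmax]
    have hsq : 1 + (x t / y t) ^ 2 = (1 / y t) ^ 2 := by
      field_simp
      linarith [hu t]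
    have hsqrt : Real.sqrt (1 + (x t / y t) ^ 2) = 1 / y t := by
      rw [hsq, Real.sqrt_sq (by positivity)]
    constructor
    · rw [Real.sin_arctan, hsqrt]
      field_simp
    · rw [Real.cos_arctan, hsqrt]
      field_simp

private lemma local_lift {x y : ℝ → ℝ} (hx : Continuous x) (hy : Continuous y)
    (hu : ∀ s, x s ^ 2 + y s ^ 2 = 1) (s₀ : ℝ) :
    ∃ ε > 0, ∃ ψ : ℝ → ℝ, Continuous ψ ∧
      ∀ t ∈ Metric.ball s₀ ε, x t = Real.sin (ψ t) ∧ y t = Real.cos (ψ t) := by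
  have hne : x s₀ ≠ 0 ∨ y s₀ ≠ 0 := by
    by_contra h
    push_neg at h
    have := hu s₀
    rw [h.1, h.2] at this
    norm_num at this
  rcases lt_trichotomy (y s₀) 0 with hy0 | hy0 | hy0
  · -- y s₀ < 0 : use (x, -y)
    obtain ⟨ε, hε, ψ, hψc, hψ⟩ := local_lift_pos hx hy.neg
      (fun s => by simpa using hu s) (s₀ := s₀) (by simpa using hy0)
    refine ⟨ε, hε, fun t => π - ψ t, (continuous_const.sub hψc), fun t ht => ?_⟩
    obtain ⟨h1, h2⟩ := hψ t ht
    constructor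
    · rw [Real.sin_pi_sub]; exact h1
    · rw [Real.cos_pi_sub]; simp only [Pi.neg_apply] at h2; linarith
  · -- y s₀ = 0, so x s₀ ≠ 0
    have hx0 : x s₀ ≠ 0 := by
      rcases hne with h | h
      · exact h
      · exact absurd hy0 h
    rcases hx0.lt_or_gt with hx0' | hx0'
    · -- x s₀ < 0 : use (y, -x)
      obtain ⟨ε, hε, ψ, hψc, hψ⟩ := local_lift_pos hy hx.neg
        (fun s => by simp only [Pi.neg_apply]; nlinarith [hu s]) (s₀ := s₀) (by simpa using hx0')
      refine ⟨ε, hε, fun t => ψ t - π / 2, (hψc.sub continuous_const), fun t ht => ?_⟩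
      obtain ⟨h1, h2⟩ := hψ t ht
      simp only [Pi.neg_apply] at h2
      constructor
      · rw [Real.sin_sub, Real.sin_pi_div_two, Real.cos_pi_div_two]; nlinarith [h2]
      · rw [Real.cos_sub, Real.sin_pi_div_two, Real.cos_pi_div_two]; nlinarith [h1]
    · -- x s₀ > 0 : use (y, x)
      obtain ⟨ε, hε, ψ, hψc, hψ⟩ := local_lift_pos hy hx
        (fun s => by nlinarith [hu s]) (s₀ := s₀) hx0'
      refine ⟨ε, hε, fun t => π / 2 - ψ t, (continuous_const.sub hψc), fun t ht => ?_⟩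
      obtain ⟨h1, h2⟩ := hψ t ht
      constructor
      · rw [Real.sin_pi_div_two_sub]; exact h2
      · rw [Real.cos_pi_div_two_sub]; exact h1
  · exact local_lift_pos hx hy hu hy0

private lemma global_lift {x y : ℝ → ℝ} (hx : Continuous x) (hy : Continuous y)
    (hu : ∀ s, x s ^ 2 + y s ^ 2 = 1) :
    ∃ φ : ℝ → ℝ, Continuous φ ∧ ∀ s, x s = Real.sin (φ s) ∧ y s = Real.cos (φ s) := by
  obtain ⟨ε₀, hε₀, ψ₀, hψ₀c, hψ₀⟩ := local_lift hx hy hu 0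
  set θ₀ := ψ₀ 0 with hθ₀
  set A : Set ℝ := {a | 0 ≤ a ∧ ∃ φ : ℝ → ℝ, Continuous φ ∧ φ 0 = θ₀ ∧
      ∀ t, |t| ≤ a → (x t = Real.sin (φ t) ∧ y t = Real.cos (φ t))} with hA
  have h0A : (0:ℝ) ∈ A := by
    refine ⟨le_refl 0, ψ₀, hψ₀c, rfl, fun t ht => ?_⟩
    have ht0 : t = 0 := by
      have := abs_nonneg t
      have : |t| = 0 := le_antisymm ht this
      exact abs_eq_zero.1 this
    rw [ht0]
    exact hψ₀ 0 (Metric.mem_ball_self hε₀)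
  have hdown : ∀ a ∈ A, ∀ b, 0 ≤ b → b ≤ a → b ∈ A := by
    rintro a ⟨_, φ, h1, h2, h3⟩ b hb0 hba
    exact ⟨hb0, φ, h1, h2, fun t ht => h3 t (le_trans ht hba)⟩
  -- extension lemma
  have hext : ∀ a c, 0 ≤ a → a ≤ c → a ∈ A →
      ∀ ψp ψm : ℝ → ℝ, Continuous ψp → Continuous ψm →
      (∀ t ∈ Set.Icc a c, x t = Real.sin (ψp t) ∧ y t = Real.cos (ψp t)) →
      (∀ t ∈ Set.Icc (-c) (-a), x t = Real.sin (ψm t) ∧ y t = Real.cos (ψm t)) →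
      c ∈ A := by
    rintro a c ha0 hac ⟨-, φ, hφc, hφ0, hφl⟩ ψp ψm hψpc hψmc hψpl hψml
    -- adjust ψp by a multiple of 2π to match φ at a
    have hpa : x a = Real.sin (ψp a) ∧ y a = Real.cos (ψp a) :=
      hψpl a ⟨le_refl a, hac⟩
    have hφa : x a = Real.sin (φ a) ∧ y a = Real.cos (φ a) :=
      hφl a (by rw [abs_of_nonneg ha0])
    obtain ⟨kp, hkp⟩ := angle_diff_lemma
      (hφa.1.symm.trans hpa.1) (hφa.2.symm.trans hpa.2)
    set ψp' : ℝ → ℝ := fun t => ψp t + kp * (2 * π) with hψp'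
    have hψp'c : Continuous ψp' := hψpc.add continuous_const
    have hψp'l : ∀ t ∈ Set.Icc a c, x t = Real.sin (ψp' t) ∧ y t = Real.cos (ψp' t) := by
      intro t ht
      obtain ⟨h1, h2⟩ := hψpl t ht
      exact ⟨by rw [hψp']; simp only [Real.sin_add_int_mul_two_pi]; exact h1,
             by rw [hψp']; simp only [Real.cos_add_int_mul_two_pi]; exact h2⟩
    have hψp'a : φ a = ψp' a := by rw [hψp']; exact hkp
    -- adjust ψm to match φ at -a
    have hma : x (-a) = Real.sin (ψm (-a)) ∧ y (-a) = Real.cos (ψm (-a)) :=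
      hψml (-a) ⟨neg_le_neg hac, le_refl _⟩
    have hφma : x (-a) = Real.sin (φ (-a)) ∧ y (-a) = Real.cos (φ (-a)) :=
      hφl (-a) (by rw [abs_neg, abs_of_nonneg ha0])
    obtain ⟨km, hkm⟩ := angle_diff_lemma
      (hφma.1.symm.trans hma.1) (hφma.2.symm.trans hma.2)
    set ψm' : ℝ → ℝ := fun t => ψm t + km * (2 * π) with hψm'
    have hψm'c : Continuous ψm' := hψmc.add continuous_const
    have hψm'l : ∀ t ∈ Set.Icc (-c) (-a), x t = Real.sin (ψm' t) ∧ y t = Real.cos (ψm' t) := by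
      intro t ht
      obtain ⟨h1, h2⟩ := hψml t ht
      exact ⟨by rw [hψm']; simp only [Real.sin_add_int_mul_two_pi]; exact h1,
             by rw [hψm']; simp only [Real.cos_add_int_mul_two_pi]; exact h2⟩
    have hψm'a : φ (-a) = ψm' (-a) := by rw [hψm']; exact hkm
    -- glue
    set inner : ℝ → ℝ := fun t => if t ≤ a then φ t else ψp' t with hinner
    have hinnerc : Continuous inner :=
      Continuous.if_le hφc hψp'c continuous_id continuous_const
        (fun t ht => by rw [ht]; exact hψp'a)
    set χ : ℝ → ℝ := fun t => if t ≤ -a then ψm' t else inner t with hχ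
    have hχc : Continuous χ := by
      refine Continuous.if_le hψm'c hinnerc continuous_id continuous_const ?_
      intro t ht
      rw [ht, hinner]
      simp only
      rw [if_pos (by linarith : -a ≤ a)]
      exact hψm'a.symm
    refine ⟨le_trans ha0 hac, χ, hχc, ?_, ?_⟩
    · -- χ 0 = θ₀
      rw [hχ]
      simp only
      by_cases h : (0:ℝ) ≤ -a
      · have ha0' : a = 0 := le_antisymm (by linarith) ha0
        rw [if_pos h]
        rw [ha0'] at hψm'a
        simp only [neg_zero] at hψm'a
        rw [← hψm'a, hφ0]
      · rw [if_neg h, hinner]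
        simp only
        rw [if_pos ha0, hφ0]
    · intro t ht
      rw [abs_le] at ht
      rw [hχ]
      simp only
      by_cases h1 : t ≤ -a
      · rw [if_pos h1]
        exact hψm'l t ⟨ht.1, h1⟩
      · rw [if_neg h1, hinner]
        simp only
        by_cases h2 : t ≤ a
        · rw [if_pos h2]
          exact hφl t (abs_le.2 ⟨by linarith, h2⟩)
        · rw [if_neg h2]
          exact hψp'l t ⟨by linarith, ht.2⟩
  -- openness
  have hKE : ∀ a ∈ A, ∃ ε > 0, a + ε ∈ A := by
    intro a haA
    have ha0 : 0 ≤ a := haA.1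
    obtain ⟨ε₁, hε₁, ψp, hψpc, hψp⟩ := local_lift hx hy hu a
    obtain ⟨ε₂, hε₂, ψm, hψmc, hψm⟩ := local_lift hx hy hu (-a)
    set ε := min ε₁ ε₂ / 2 with hε
    have hεpos : 0 < ε := by positivity
    refine ⟨ε, hεpos, hext a (a + ε) ha0 (by linarith) haA ψp ψm hψpc hψmc ?_ ?_⟩
    · intro t ⟨h1, h2⟩
      apply hψp
      rw [Metric.mem_ball, Real.dist_eq, abs_lt]
      constructor
      · have : min ε₁ ε₂ ≤ ε₁ := min_le_left _ _
        linarith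
      · have : min ε₁ ε₂ ≤ ε₁ := min_le_left _ _
        linarith
    · intro t ⟨h1, h2⟩
      apply hψm
      rw [Metric.mem_ball, Real.dist_eq, abs_lt]
      constructor
      · have : min ε₁ ε₂ ≤ ε₂ := min_le_right _ _
        linarith
      · have : min ε₁ ε₂ ≤ ε₂ := min_le_right _ _
        linarith
  -- closedness
  have hclosed : ∀ m, 0 < m → (∀ b, 0 ≤ b → b < m → b ∈ A) → m ∈ A := by
    intro m hm hall
    obtain ⟨ε₁, hε₁, ψp, hψpc, hψp⟩ := local_lift hx hy hu m
    obtain ⟨ε₂, hε₂, ψm, hψmc, hψm⟩ := local_lift hx hy hu (-m)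
    set δ := min (min ε₁ ε₂) m / 2 with hδ
    have hδpos : 0 < δ := by positivity
    have hδm : δ < m := by
      have : min (min ε₁ ε₂) m ≤ m := min_le_right _ _
      rw [hδ]; linarith
    have hδ1 : δ < ε₁ := by
      have h1 : min (min ε₁ ε₂) m ≤ ε₁ := le_trans (min_le_left _ _) (min_le_left _ _)
      rw [hδ]; linarith
    have hδ2 : δ < ε₂ := by
      have h1 : min (min ε₁ ε₂) m ≤ ε₂ := le_trans (min_le_left _ _) (min_le_right _ _)
      rw [hδ]; linarith
    set b := m - δ with hb
    have hb0 : 0 ≤ b := by rw [hb]; linarith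
    refine hext b m hb0 (by rw [hb]; linarith) (hall b hb0 (by rw [hb]; linarith)) ψp ψm hψpc hψmc ?_ ?_
    · intro t ⟨h1, h2⟩
      apply hψp
      rw [Metric.mem_ball, Real.dist_eq, abs_lt]
      rw [hb] at h1
      constructor <;> linarith
    · intro t ⟨h1, h2⟩
      apply hψm
      rw [Metric.mem_ball, Real.dist_eq, abs_lt]
      rw [hb] at h2
      constructor <;> linarith
  -- A = [0, ∞)
  have hall : ∀ a : ℝ, 0 ≤ a → a ∈ A := by
    by_contra h
    push_neg at h
    obtain ⟨a, ha0, haA⟩ := h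
    set S := {b : ℝ | 0 ≤ b ∧ b ∉ A} with hS
    have hSne : S.Nonempty := ⟨a, ha0, haA⟩
    have hSbd : BddBelow S := ⟨0, fun b hb => hb.1⟩
    set m := sInf S with hm
    have hm0 : 0 ≤ m := le_csInf hSne (fun b hb => hb.1)
    have hmA : m ∈ A := by
      rcases eq_or_lt_of_le hm0 with h' | h'
      · exact h' ▸ h0A
      · refine hclosed m h' (fun b hb0 hbm => ?_)
        by_contra hbA
        exact absurd (csInf_le hSbd ⟨hb0, hbA⟩) (not_le.2 hbm)
    obtain ⟨ε, hε, hmε⟩ := hKE m hmA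
    have hlb : ∀ b ∈ S, m + ε ≤ b := by
      intro b hb
      by_contra hlt
      push_neg at hlt
      exact hb.2 (hdown _ hmε b hb.1 hlt.le)
    have := le_csInf hSne hlb
    rw [← hm] at this
    linarith
  -- assemble
  have hfn : ∀ n : ℕ, ∃ φ : ℝ → ℝ, Continuous φ ∧ φ 0 = θ₀ ∧
      ∀ t, |t| ≤ (n:ℝ) → (x t = Real.sin (φ t) ∧ y t = Real.cos (φ t)) :=
    fun n => (hall n (Nat.cast_nonneg n)).2
  choose f hfc hf0 hfl using hfn
  have coh : ∀ (n m : ℕ), n ≤ m → ∀ t, |t| ≤ (n:ℝ) → f n t = f m t := by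
    intro n m hnm t ht
    have hpre : IsPreconnected (Set.Icc (-(n:ℝ)) n) := isPreconnected_Icc
    have h0mem : (0:ℝ) ∈ Set.Icc (-(n:ℝ)) n := by
      constructor <;> simp [Nat.cast_nonneg]
    have := lift_unique hpre (hfc n) (hfc m)
      (fun u hu' => hfl n u (abs_le.2 ⟨hu'.1, hu'.2⟩))
      (fun u hu' => hfl m u (le_trans (abs_le.2 ⟨hu'.1, hu'.2⟩) (Nat.cast_le.2 hnm)))
      h0mem ((hf0 n).trans (hf0 m).symm)
    exact this (abs_le.1 ht)
  refine ⟨fun s => f ⌈|s|⌉₊ s, ?_, ?_⟩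
  · rw [continuous_iff_continuousAt]
    intro s₀
    set n := ⌈|s₀|⌉₊ + 1 with hn
    have heq : ∀ t ∈ Metric.ball s₀ 1, f ⌈|t|⌉₊ t = f n t := by
      intro t ht
      rw [Metric.mem_ball, Real.dist_eq] at ht
      have htn : |t| ≤ (n:ℝ) := by
        have h1 : |t| ≤ |s₀| + 1 := by
          calc |t| = |s₀ + (t - s₀)| := by ring_nf
          _ ≤ |s₀| + |t - s₀| := abs_add_le _ _
          _ ≤ |s₀| + 1 := by linarith
        have h2 : |s₀| ≤ (⌈|s₀|⌉₊ : ℝ) := Nat.le_ceil _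
        rw [hn]
        push_cast
        linarith
      have hceil : ⌈|t|⌉₊ ≤ n := Nat.ceil_le.2 htn
      exact coh _ n hceil t (Nat.le_ceil _)
    have hball : Metric.ball s₀ 1 ∈ nhds s₀ := Metric.ball_mem_nhds s₀ one_pos
    exact ((hfc n).continuousAt).congr
      (Filter.eventuallyEq_of_mem hball (fun t ht => heq t ht)).symm
  · intro s
    exact hfl _ s (Nat.le_ceil _)

private lemma lift_hasDerivAt {κ x y φ : ℝ → ℝ}
    (hx : ∀ s, HasDerivAt x (y s * κ s) s)
    (hy : ∀ s, HasDerivAt y (-(x s * κ s)) s)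
    (hu : ∀ s, x s ^ 2 + y s ^ 2 = 1)
    (hφc : Continuous φ)
    (hl : ∀ s, x s = Real.sin (φ s) ∧ y s = Real.cos (φ s)) (s₀ : ℝ) :
    HasDerivAt φ (κ s₀) s₀ := by
  have hπ : (0:ℝ) < π := Real.pi_pos
  have hxc : Continuous x := by
    rw [continuous_iff_continuousAt]; exact fun t => (hx t).continuousAt
  have hyc : Continuous y := by
    rw [continuous_iff_continuousAt]; exact fun t => (hy t).continuousAt
  have hne : x s₀ ≠ 0 ∨ y s₀ ≠ 0 := by
    by_contra h
    push_neg at h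
    have := hu s₀
    rw [h.1, h.2] at this
    norm_num at this
  rcases hne with hx0 | hy0
  · -- x s₀ ≠ 0, use g = -arctan (y/x)
    set g : ℝ → ℝ := fun t => -Real.arctan (y t / x t) with hg
    have hgd : HasDerivAt g (κ s₀) s₀ := by
      have hdiv : HasDerivAt (fun t => y t / x t)
          ((-(x s₀ * κ s₀) * x s₀ - y s₀ * (y s₀ * κ s₀)) / x s₀ ^ 2) s₀ :=
        (hy s₀).div (hx s₀) hx0
      have harc := Real.hasDerivAt_arctan (y s₀ / x s₀)
      have hcomp := (harc.comp s₀ hdiv).neg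
      refine HasDerivAt.congr_deriv hcomp ?_
      have h1 : 1 + (y s₀ / x s₀) ^ 2 = 1 / x s₀ ^ 2 := by
        field_simp
        linarith [hu s₀]
      rw [h1]
      field_simp
      linear_combination (κ s₀) * hu s₀
    have hev : ∀ᶠ t in nhds s₀, x t ≠ 0 := hxc.continuousAt.eventually_ne hx0
    have hksh : ∀ᶠ t in nhds s₀, ∃ k : ℤ, φ t = g t + π / 2 + k * π := by
      filter_upwards [hev] with t ht
      have hcosne : Real.cos (π / 2 - φ t) ≠ 0 := by
        rw [Real.cos_pi_div_two_sub, ← (hl t).1]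
        exact ht
      obtain ⟨k, hk⟩ := arctan_tan_shift hcosne
      have htan : Real.tan (π / 2 - φ t) = y t / x t := by
        rw [Real.tan_eq_sin_div_cos, Real.sin_pi_div_two_sub, Real.cos_pi_div_two_sub,
          ← (hl t).1, ← (hl t).2]
      rw [htan] at hk
      refine ⟨k, ?_⟩
      show φ t = -Real.arctan (y t / x t) + π / 2 + (k : ℝ) * π
      push_cast
      linarith [hk]
    have hgc : ContinuousAt g s₀ :=
      ((Real.continuous_arctan.continuousAt).comp
        ((hyc.continuousAt).div (hxc.continuousAt) hx0)).neg
    have hhc : ContinuousAt (fun t => (φ t - g t - π / 2) / π) s₀ :=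
      (((hφc.continuousAt).sub hgc).sub continuousAt_const).div_const _
    obtain ⟨k₀, hk₀⟩ := hksh.self_of_nhds
    have hclose : ∀ᶠ t in nhds s₀, |(φ t - g t - π / 2) / π - (φ s₀ - g s₀ - π / 2) / π| < 1/2 := by
      have := hhc.eventually_mem (Metric.ball_mem_nhds _ (by norm_num : (0:ℝ) < 1/2))
      filter_upwards [this] with t ht
      rw [Metric.mem_ball, Real.dist_eq] at ht
      exact ht
    have hev2 : ∀ᶠ t in nhds s₀, φ t = g t + (π / 2 + k₀ * π) := by
      filter_upwards [hksh, hclose] with t ⟨k, hk⟩ hclose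
      have hht : (φ t - g t - π / 2) / π = k := by rw [hk]; field_simp; try ring
      have hhs : (φ s₀ - g s₀ - π / 2) / π = k₀ := by rw [hk₀]; field_simp; try ring
      rw [hht, hhs] at hclose
      have : (k : ℝ) = k₀ := by
        have h2 : |(k : ℝ) - k₀| < 1 := lt_trans hclose (by norm_num)
        have h3 : |(k - k₀ : ℤ)| < 1 := by exact_mod_cast h2
        have h4 := abs_lt.1 h3
        have : k = k₀ := by omega
        exact_mod_cast congrArg (Int.cast : ℤ → ℝ) this
      rw [hk, this]
      ring
    exact (hgd.add_const (π / 2 + k₀ * π)).congr_of_eventuallyEq hev2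
  · -- y s₀ ≠ 0, use g = arctan (x/y)
    set g : ℝ → ℝ := fun t => Real.arctan (x t / y t) with hg
    have hgd : HasDerivAt g (κ s₀) s₀ := by
      have hdiv : HasDerivAt (fun t => x t / y t)
          ((y s₀ * κ s₀ * y s₀ - x s₀ * -(x s₀ * κ s₀)) / y s₀ ^ 2) s₀ :=
        (hx s₀).div (hy s₀) hy0
      have harc := Real.hasDerivAt_arctan (x s₀ / y s₀)
      have hcomp := harc.comp s₀ hdiv
      refine HasDerivAt.congr_deriv hcomp ?_
      have h1 : 1 + (x s₀ / y s₀) ^ 2 = 1 / y s₀ ^ 2 := by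
        field_simp
        linarith [hu s₀]
      rw [h1]
      field_simp
      linear_combination (κ s₀) * hu s₀
    have hev : ∀ᶠ t in nhds s₀, y t ≠ 0 := hyc.continuousAt.eventually_ne hy0
    have hksh : ∀ᶠ t in nhds s₀, ∃ k : ℤ, φ t = g t + k * π := by
      filter_upwards [hev] with t ht
      have hcosne : Real.cos (φ t) ≠ 0 := by rw [← (hl t).2]; exact ht
      obtain ⟨k, hk⟩ := arctan_tan_shift hcosne
      have htan : Real.tan (φ t) = x t / y t := by
        rw [Real.tan_eq_sin_div_cos, ← (hl t).1, ← (hl t).2]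
      rw [htan] at hk
      refine ⟨-k, ?_⟩
      show φ t = Real.arctan (x t / y t) + ((-k : ℤ) : ℝ) * π
      push_cast
      linarith [hk]
    have hgc : ContinuousAt g s₀ :=
      (Real.continuous_arctan.continuousAt).comp
        ((hxc.continuousAt).div (hyc.continuousAt) hy0)
    have hhc : ContinuousAt (fun t => (φ t - g t) / π) s₀ :=
      ((hφc.continuousAt).sub hgc).div_const _
    obtain ⟨k₀, hk₀⟩ := hksh.self_of_nhds
    have hclose : ∀ᶠ t in nhds s₀, |(φ t - g t) / π - (φ s₀ - g s₀) / π| < 1/2 := by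
      have := hhc.eventually_mem (Metric.ball_mem_nhds _ (by norm_num : (0:ℝ) < 1/2))
      filter_upwards [this] with t ht
      rw [Metric.mem_ball, Real.dist_eq] at ht
      exact ht
    have hev2 : ∀ᶠ t in nhds s₀, φ t = g t + k₀ * π := by
      filter_upwards [hksh, hclose] with t ⟨k, hk⟩ hclose
      have hht : (φ t - g t) / π = k := by rw [hk]; field_simp; try ring
      have hhs : (φ s₀ - g s₀) / π = k₀ := by rw [hk₀]; field_simp; try ring
      rw [hht, hhs] at hclose
      have : (k : ℝ) = k₀ := by
        have h2 : |(k : ℝ) - k₀| < 1 := lt_trans hclose (by norm_num)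
        have h3 : |(k - k₀ : ℤ)| < 1 := by exact_mod_cast h2
        have h4 := abs_lt.1 h3
        have : k = k₀ := by omega
        exact_mod_cast congrArg (Int.cast : ℤ → ℝ) this
      rw [hk, this]
    exact (hgd.add_const (k₀ * π)).congr_of_eventuallyEq hev2


/-- Mannheim condition forces `z ≡ 0`, `x = sin(∫κ)`,
`y = cos(∫κ)`. -/
theorem mannheim_direction_coefficients
    (κ τ x y z x' y' z' : ℝ → ℝ)
    (hκ : ∀ s, 0 < κ s)
    (hx : ∀ s, HasDerivAt x (x' s) s)
    (hy : ∀ s, HasDerivAt y (y' s) s)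
    (hz : ∀ s, HasDerivAt z (z' s) s)
    (hunit : ∀ s, x s ^ 2 + y s ^ 2 + z s ^ 2 = 1)
    (hm1 : ∀ s, x' s - y s * κ s = 0)
    (hm2 : ∀ s, y' s + x s * κ s - z s * τ s = 0)
    (hm3 : ∀ s, z' s + y s * τ s ≠ 0) :
    (∀ s, z s = 0) ∧
      ∃ φ : ℝ → ℝ, (∀ s, HasDerivAt φ (κ s) s) ∧
        ∀ s, x s = sin (φ s) ∧ y s = cos (φ s) := by
  have hz0 : ∀ s, z s = 0 := by
    intro s
    have hD : HasDerivAt (fun u => x u ^ 2 + y u ^ 2 + z u ^ 2)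
        (2 * x s ^ 1 * x' s + 2 * y s ^ 1 * y' s + 2 * z s ^ 1 * z' s) s :=
      (((hx s).pow 2).add ((hy s).pow 2)).add ((hz s).pow 2)
    have hfun : (fun u => x u ^ 2 + y u ^ 2 + z u ^ 2) = fun _ : ℝ => (1:ℝ) :=
      funext hunit
    rw [hfun] at hD
    have h0 : 2 * x s ^ 1 * x' s + 2 * y s ^ 1 * y' s + 2 * z s ^ 1 * z' s = 0 :=
      hD.unique (hasDerivAt_const s 1)
    have hzz : z s * (z' s + y s * τ s) = 0 := by
      have e1 := hm1 s
      have e2 := hm2 s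
      simp only [pow_one] at h0
      linear_combination (1/2) * h0 + (- x s) * e1 + (- y s) * e2
    exact (mul_eq_zero.1 hzz).resolve_right (hm3 s)
  have hx'eq : ∀ s, x' s = y s * κ s := fun s => by linarith [hm1 s]
  have hy'eq : ∀ s, y' s = -(x s * κ s) := fun s => by
    have := hm2 s
    rw [hz0 s] at this
    linarith
  have hxd : ∀ s, HasDerivAt x (y s * κ s) s := fun s => by
    have := hx s; rwa [hx'eq s] at this
  have hyd : ∀ s, HasDerivAt y (-(x s * κ s)) s := fun s => by
    have := hy s; rwa [hy'eq s] at this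
  have hu2 : ∀ s, x s ^ 2 + y s ^ 2 = 1 := fun s => by
    have := hunit s; rw [hz0 s] at this; linarith
  have hxc : Continuous x := by
    rw [continuous_iff_continuousAt]; exact fun t => (hxd t).continuousAt
  have hyc : Continuous y := by
    rw [continuous_iff_continuousAt]; exact fun t => (hyd t).continuousAt
  obtain ⟨φ, hφc, hφl⟩ := global_lift hxc hyc hu2
  exact ⟨hz0, φ, fun s => lift_hasDerivAt hxd hyd hu2 hφc hφl s, hφl⟩
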